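/- arXiv:2506.13715 — 3 statements merged into one kernel-verified Lean document; each statement's English description precedes it below -/
import Mathlib

section
/- Let n, d ∈ ℕ with d ≥ 1, let σ > 0 and L > 0, and suppose the vectors ξ_1,…,ξ_n ∈ ℝ^d satisfy ‖ξ_i‖² ≥ σ²·d/2 for all i and |⟨ξ_i, ξ_j⟩| ≤ 2·σ²·√(d·L) for all i ≠ j. Then for all real numbers c_1,…,c_n: ‖Σ_{i=1}^n c_i·ξ_i/‖ξ_i‖²‖² ≤ 4·σ^{-2}·d^{-1}·Σ_{i=1}^n c_i² + 32·σ^{-2}·d^{-3/2}·√L·((Σ_{i=1}^n |c_i|)² − Σ_{i=1}^n c_i²). -/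
theorem norm_sq_weighted_noise_sum_bound (n d : ℕ) (hd : 1 ≤ d)
    (σ L : ℝ) (hσ : 0 < σ) (hL : 0 < L)
    (ξ : Fin n → EuclideanSpace ℝ (Fin d))
    (hnorm : ∀ i : Fin n, σ ^ 2 * d / 2 ≤ ‖ξ i‖ ^ 2)
    (hinner : ∀ i j : Fin n, i ≠ j →
      |(inner ℝ (ξ i) (ξ j) : ℝ)| ≤ 2 * σ ^ 2 * Real.sqrt (d * L))
    (c : Fin n → ℝ) :
    ‖∑ i : Fin n, (c i / ‖ξ i‖ ^ 2) • ξ i‖ ^ 2 ≤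
      4 / (σ ^ 2 * d) * ∑ i : Fin n, (c i) ^ 2 +
        32 / (σ ^ 2 * (d : ℝ) ^ ((3 : ℝ) / 2)) * Real.sqrt L *
          ((∑ i : Fin n, |c i|) ^ 2 - ∑ i : Fin n, (c i) ^ 2) := by
  have hd1 : (1:ℝ) ≤ (d:ℝ) := by exact_mod_cast hd
  have hdpos : (0:ℝ) < d := by linarith
  have hA : (0:ℝ) < σ ^ 2 * d := by positivity
  have hsd : Real.sqrt d * Real.sqrt d = d := Real.mul_self_sqrt hdpos.le
  have hsdpos : 0 < Real.sqrt d := Real.sqrt_pos.2 hdpos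
  have hsL : 0 ≤ Real.sqrt L := Real.sqrt_nonneg L
  have hrpow : (d:ℝ) ^ ((3:ℝ)/2) = d * Real.sqrt d := by
    rw [show (3:ℝ)/2 = 1 + 1/2 by norm_num, Real.rpow_add hdpos, Real.rpow_one,
      ← Real.sqrt_eq_rpow]
  set N : Fin n → ℝ := fun i => ‖ξ i‖ ^ 2 with hNdef
  have hNpos : ∀ i, 0 < N i := fun i => lt_of_lt_of_le (by positivity) (hnorm i)
  have hNinv : ∀ i, 1 / N i ≤ 2 / (σ ^ 2 * d) := by
    intro i
    rw [div_le_div_iff₀ (hNpos i) hA]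
    have := hnorm i
    simp only [hNdef] at *
    nlinarith
  set K : ℝ := 8 * Real.sqrt L / (σ ^ 2 * (d * Real.sqrt d)) with hKdef
  have hKnn : 0 ≤ K := by positivity
  have expand : ‖∑ i : Fin n, (c i / N i) • ξ i‖ ^ 2 =
      ∑ i : Fin n, ∑ j : Fin n, (c i / N i) * ((c j / N j) * (inner ℝ (ξ i) (ξ j) : ℝ)) := by
    rw [← real_inner_self_eq_norm_sq]
    simp_rw [inner_sum, sum_inner, real_inner_smul_left, real_inner_smul_right]
    rw [Finset.sum_comm]
  have hgen : ∀ x y : ℝ, 0 < y → x / y * (x / y * y) = x ^ 2 * (1 / y) := by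
    intro x y hy; field_simp
  have hdiag : ∀ i, (c i / N i) * ((c i / N i) * (inner ℝ (ξ i) (ξ i) : ℝ)) ≤
      2 / (σ ^ 2 * d) * (c i) ^ 2 := by
    intro i
    have h0 : (inner ℝ (ξ i) (ξ i) : ℝ) = N i := real_inner_self_eq_norm_sq (ξ i)
    rw [h0, hgen _ _ (hNpos i)]
    have := hNinv i
    nlinarith [sq_nonneg (c i)]
  have hoff : ∀ i j, i ≠ j →
      (c i / N i) * ((c j / N j) * (inner ℝ (ξ i) (ξ j) : ℝ)) ≤ K * (|c i| * |c j|) := by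
    intro i j hij
    have h1 : |c i| * (1 / N i) ≤ |c i| * (2 / (σ ^ 2 * d)) :=
      mul_le_mul_of_nonneg_left (hNinv i) (abs_nonneg _)
    have h2 : |c j| * (1 / N j) ≤ |c j| * (2 / (σ ^ 2 * d)) :=
      mul_le_mul_of_nonneg_left (hNinv j) (abs_nonneg _)
    have h3 := hinner i j hij
    have hinn : (|c j| * (1 / N j)) * |(inner ℝ (ξ i) (ξ j) : ℝ)| ≤
        (|c j| * (2 / (σ ^ 2 * d))) * (2 * σ ^ 2 * Real.sqrt (d * L)) :=
      mul_le_mul h2 h3 (abs_nonneg _) (by positivity)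
    calc (c i / N i) * ((c j / N j) * (inner ℝ (ξ i) (ξ j) : ℝ))
        ≤ |(c i / N i) * ((c j / N j) * (inner ℝ (ξ i) (ξ j) : ℝ))| := le_abs_self _
      _ = (|c i| * (1 / N i)) * ((|c j| * (1 / N j)) * |(inner ℝ (ξ i) (ξ j) : ℝ)|) := by
          rw [abs_mul, abs_mul, abs_div, abs_div, abs_of_pos (hNpos i), abs_of_pos (hNpos j)]
          ring
      _ ≤ (|c i| * (2 / (σ ^ 2 * d))) * ((|c j| * (2 / (σ ^ 2 * d))) *
            (2 * σ ^ 2 * Real.sqrt (d * L))) := by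
          apply mul_le_mul h1 hinn
          · exact mul_nonneg (mul_nonneg (abs_nonneg _)
              (one_div_nonneg.2 (hNpos j).le)) (abs_nonneg _)
          · positivity
      _ = K * (|c i| * |c j|) := by
          rw [hKdef, Real.sqrt_mul hdpos.le]
          have h4 : σ ^ 2 ≠ 0 := by positivity
          have h5 : (d:ℝ) ≠ 0 := hdpos.ne'
          have h6 : Real.sqrt d ≠ 0 := hsdpos.ne'
          generalize hs : Real.sqrt (d:ℝ) = s at hsd h6 ⊢
          rw [← hsd]
          field_simp
          ring
  have split : ∀ i : Fin n,
      ∑ j : Fin n, (c i / N i) * ((c j / N j) * (inner ℝ (ξ i) (ξ j) : ℝ)) =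
      (c i / N i) * ((c i / N i) * (inner ℝ (ξ i) (ξ i) : ℝ)) +
        ∑ j ∈ Finset.univ.erase i, (c i / N i) * ((c j / N j) * (inner ℝ (ξ i) (ξ j) : ℝ)) := by
    intro i
    rw [← Finset.add_sum_erase _ _ (Finset.mem_univ i)]
  have habs : ∀ i : Fin n, |c i| * |c i| = (c i) ^ 2 := by
    intro i; rw [← abs_mul, abs_of_nonneg (mul_self_nonneg _)]; ring
  have key : ‖∑ i : Fin n, (c i / N i) • ξ i‖ ^ 2 ≤
      2 / (σ ^ 2 * d) * ∑ i : Fin n, (c i) ^ 2 +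
        K * ((∑ i : Fin n, |c i|) ^ 2 - ∑ i : Fin n, (c i) ^ 2) := by
    rw [expand]
    calc ∑ i : Fin n, ∑ j : Fin n, (c i / N i) * ((c j / N j) * (inner ℝ (ξ i) (ξ j) : ℝ))
        = ∑ i : Fin n, ((c i / N i) * ((c i / N i) * (inner ℝ (ξ i) (ξ i) : ℝ)) +
            ∑ j ∈ Finset.univ.erase i, (c i / N i) * ((c j / N j) * (inner ℝ (ξ i) (ξ j) : ℝ))) :=
          Finset.sum_congr rfl fun i _ => split i
      _ ≤ ∑ i : Fin n, (2 / (σ ^ 2 * d) * (c i) ^ 2 +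
            ∑ j ∈ Finset.univ.erase i, K * (|c i| * |c j|)) := by
          apply Finset.sum_le_sum
          intro i _
          apply add_le_add (hdiag i)
          apply Finset.sum_le_sum
          intro j hj
          exact hoff i j (Finset.ne_of_mem_erase hj).symm
      _ = 2 / (σ ^ 2 * d) * ∑ i : Fin n, (c i) ^ 2 +
            K * ((∑ i : Fin n, |c i|) ^ 2 - ∑ i : Fin n, (c i) ^ 2) := by
          rw [Finset.sum_add_distrib, ← Finset.mul_sum]
          congr 1
          have heq : ∀ i : Fin n, ∑ j ∈ Finset.univ.erase i, K * (|c i| * |c j|) =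
              K * (|c i| * ((∑ j : Fin n, |c j|) - |c i|)) := by
            intro i
            rw [← Finset.mul_sum, ← Finset.mul_sum,
              Finset.sum_erase_eq_sub (Finset.mem_univ i)]
          rw [Finset.sum_congr rfl fun i _ => heq i, ← Finset.mul_sum]
          congr 1
          simp_rw [mul_sub]
          rw [Finset.sum_sub_distrib, ← Finset.sum_mul, sq]
          congr 1
          exact Finset.sum_congr rfl fun i _ => habs i
  have hT : 0 ≤ (∑ i : Fin n, |c i|) ^ 2 - ∑ i : Fin n, (c i) ^ 2 := by
    have h1 : ∑ i : Fin n, (c i) ^ 2 = ∑ i : Fin n, |c i| ^ 2 :=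
      Finset.sum_congr rfl fun i _ => (sq_abs (c i)).symm
    rw [h1]
    have h2 : ∑ i : Fin n, |c i| ^ 2 ≤ (∑ i : Fin n, |c i|) ^ 2 := by
      apply Finset.sum_sq_le_sq_sum_of_nonneg
      intro i _; exact abs_nonneg _
    linarith
  have hKle : K ≤ 32 / (σ ^ 2 * (d:ℝ) ^ ((3:ℝ)/2)) * Real.sqrt L := by
    rw [hrpow, hKdef, div_mul_eq_mul_div]
    gcongr
    linarith
  have hsum2 : 0 ≤ ∑ i : Fin n, (c i) ^ 2 := Finset.sum_nonneg fun i _ => sq_nonneg _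
  calc ‖∑ i : Fin n, (c i / N i) • ξ i‖ ^ 2
      ≤ 2 / (σ ^ 2 * d) * ∑ i : Fin n, (c i) ^ 2 +
        K * ((∑ i : Fin n, |c i|) ^ 2 - ∑ i : Fin n, (c i) ^ 2) := key
    _ ≤ 4 / (σ ^ 2 * d) * ∑ i : Fin n, (c i) ^ 2 +
        32 / (σ ^ 2 * (d:ℝ) ^ ((3:ℝ)/2)) * Real.sqrt L *
          ((∑ i : Fin n, |c i|) ^ 2 - ∑ i : Fin n, (c i) ^ 2) := by
        apply add_le_add
        · apply mul_le_mul_of_nonneg_right _ hsum2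
          gcongr
          norm_num
        · exact mul_le_mul_of_nonneg_right hKle hT
end

section
/- For every d ∈ ℕ, σ > 0, v ∈ ℝ^d, and every measurable set A ⊆ ℝ^d: |μ_{d,σ}(A) − μ_{d,σ}({x : x + v ∈ A})| ≤ ‖v‖/(2σ). Equivalently, the total variation distance between N(0, σ²·I_d) and N(v, σ²·I_d) is at most ‖v‖/(2σ). -/
open MeasureTheory ProbabilityTheory Real

/-- The centered isotropic Gaussian measure `N(0, σ²·I_d)` on `ℝ^d`. -/
noncomputable def gaussianPi (d : ℕ) (σ : ℝ) :
    Measure (EuclideanSpace ℝ (Fin d)) :=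
  (Measure.pi fun _ : Fin d => gaussianReal 0 ⟨σ ^ 2, sq_nonneg σ⟩).map
    (MeasurableEquiv.toLp 2 (Fin d → ℝ))

open scoped NNReal ENNReal

lemma gaussTV_isProb_aux (μ : ℝ) (v : ℝ≥0) : IsProbabilityMeasure (gaussianReal μ v) :=
  inferInstance

instance gaussTV_isProb (μ σ : ℝ) : IsProbabilityMeasure (gaussianReal μ ⟨σ ^ 2, sq_nonneg σ⟩) :=
  gaussTV_isProb_aux μ _

namespace GaussTV


/-- 1D Radon–Nikodym factor of `N(m,σ²)` w.r.t. `N(0,σ²)`. -/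
noncomputable def gr (σ m t : ℝ) : ℝ := rexp ((2 * t * m - m ^ 2) / (2 * σ ^ 2))

lemma gr_pos {σ m t : ℝ} : 0 < gr σ m t := Real.exp_pos _

lemma measurable_gr (σ m : ℝ) : Measurable (gr σ m) := by
  unfold gr; fun_prop

variable {σ : ℝ}

lemma Vne (hσ : 0 < σ) : (⟨σ ^ 2, sq_nonneg σ⟩ : ℝ≥0) ≠ 0 := by
  intro h
  apply (pow_pos hσ 2).ne'
  have := congrArg NNReal.toReal h
  exact this

lemma pdf_eq (hσ : 0 < σ) (m t : ℝ) :
    gaussianPDFReal m ⟨σ ^ 2, sq_nonneg σ⟩ t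
      = gaussianPDFReal 0 ⟨σ ^ 2, sq_nonneg σ⟩ t * gr σ m t := by
  unfold gaussianPDFReal gr
  simp only [sub_zero]
  change (√(2 * π * σ ^ 2))⁻¹ * rexp (-(t - m) ^ 2 / (2 * σ ^ 2)) =
    (√(2 * π * σ ^ 2))⁻¹ * rexp (-t ^ 2 / (2 * σ ^ 2)) * rexp ((2 * t * m - m ^ 2) / (2 * σ ^ 2))
  have hne : σ ^ 2 ≠ 0 := (pow_pos hσ 2).ne'
  have h3 : rexp (-(t - m) ^ 2 / (2 * σ ^ 2))
      = rexp (-t ^ 2 / (2 * σ ^ 2)) * rexp ((2 * t * m - m ^ 2) / (2 * σ ^ 2)) := by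
    rw [← Real.exp_add, Real.exp_eq_exp]
    field_simp
    ring
  rw [h3]
  ring

lemma gauss_withDensity (hσ : 0 < σ) (m : ℝ) :
    gaussianReal m ⟨σ ^ 2, sq_nonneg σ⟩
      = (gaussianReal 0 ⟨σ ^ 2, sq_nonneg σ⟩).withDensity
          (fun t => ENNReal.ofReal (gr σ m t)) := by
  rw [gaussianReal_of_var_ne_zero _ (Vne hσ), gaussianReal_of_var_ne_zero _ (Vne hσ),
    ← withDensity_mul _ (measurable_gaussianPDF 0 ⟨σ ^ 2, sq_nonneg σ⟩) ((measurable_gr σ m).ennreal_ofReal)]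
  congr 1
  ext t
  simp only [Pi.mul_apply, gaussianPDF]
  rw [← ENNReal.ofReal_mul (gaussianPDFReal_nonneg 0 ⟨σ ^ 2, sq_nonneg σ⟩ t), ← pdf_eq hσ]

lemma integrable_gr (hσ : 0 < σ) (m : ℝ) :
    Integrable (gr σ m) (gaussianReal 0 ⟨σ ^ 2, sq_nonneg σ⟩) := by
  refine ⟨(measurable_gr σ m).aestronglyMeasurable, ?_⟩
  rw [hasFiniteIntegral_iff_norm]
  have : ∀ t : ℝ, ENNReal.ofReal ‖gr σ m t‖ = ENNReal.ofReal (gr σ m t) := by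
    intro t; rw [Real.norm_of_nonneg gr_pos.le]
  simp_rw [this]
  have h := gauss_withDensity hσ m
  have : ((gaussianReal 0 ⟨σ ^ 2, sq_nonneg σ⟩).withDensity
      (fun t => ENNReal.ofReal (gr σ m t))) Set.univ = 1 := by
    rw [← h]; simp
  rw [withDensity_apply _ MeasurableSet.univ, Measure.restrict_univ] at this
  simp [this]

lemma setIntegral_gr (hσ : 0 < σ) (m : ℝ) {s : Set ℝ} (hs : MeasurableSet s) :
    ∫ t in s, gr σ m t ∂(gaussianReal 0 ⟨σ ^ 2, sq_nonneg σ⟩)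
      = ((gaussianReal m ⟨σ ^ 2, sq_nonneg σ⟩) s).toReal := by
  rw [gauss_withDensity hσ m, withDensity_apply _ hs,
    ← ofReal_integral_eq_lintegral_ofReal ((integrable_gr hσ m).restrict)
      (ae_of_all _ fun t => gr_pos.le),
    ENNReal.toReal_ofReal (setIntegral_nonneg hs fun t _ => gr_pos.le)]

lemma integral_gr (hσ : 0 < σ) (m : ℝ) :
    ∫ t, gr σ m t ∂(gaussianReal 0 ⟨σ ^ 2, sq_nonneg σ⟩) = 1 := by
  have h := setIntegral_gr hσ m MeasurableSet.univ
  simpa using h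

lemma sqrt_exp (a : ℝ) : Real.sqrt (rexp a) = rexp (a / 2) := by
  rw [show rexp a = rexp (a / 2) ^ 2 by rw [sq, ← Real.exp_add]; ring_nf,
    Real.sqrt_sq (Real.exp_nonneg _)]

lemma sqrt_gr (hσ : 0 < σ) (m t : ℝ) :
    Real.sqrt (gr σ m t) = rexp (-m ^ 2 / (8 * σ ^ 2)) * gr σ (m / 2) t := by
  unfold gr
  rw [sqrt_exp, ← Real.exp_add]
  congr 1
  have : σ ^ 2 ≠ 0 := (pow_pos hσ 2).ne'
  field_simp
  ring

lemma integrable_sqrt_gr (hσ : 0 < σ) (m : ℝ) :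
    Integrable (fun t => Real.sqrt (gr σ m t)) (gaussianReal 0 ⟨σ ^ 2, sq_nonneg σ⟩) := by
  simp_rw [sqrt_gr hσ m]
  exact (integrable_gr hσ (m / 2)).const_mul _

lemma integral_sqrt_gr (hσ : 0 < σ) (m : ℝ) :
    ∫ t, Real.sqrt (gr σ m t) ∂(gaussianReal 0 ⟨σ ^ 2, sq_nonneg σ⟩)
      = rexp (-m ^ 2 / (8 * σ ^ 2)) := by
  simp_rw [sqrt_gr hσ m]
  rw [integral_const_mul, integral_gr hσ, mul_one]


lemma pi_integral {d : ℕ} (m : Measure ℝ) [SigmaFinite m] (f : Fin d → ℝ → ℝ) :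
    ∫ x : Fin d → ℝ, ∏ i, f i (x i) ∂(Measure.pi fun _ => m) = ∏ i, ∫ t, f i t ∂m := by
  letI : MeasureSpace ℝ := ⟨m⟩
  haveI : SigmaFinite (volume : Measure ℝ) := ‹SigmaFinite m›
  exact MeasureTheory.integral_fintype_prod_eq_prod f

lemma pi_integrable {d : ℕ} (m : Measure ℝ) [SigmaFinite m] (f : Fin d → ℝ → ℝ)
    (hf : ∀ i, Integrable (f i) m) :
    Integrable (fun x : Fin d → ℝ => ∏ i, f i (x i)) (Measure.pi fun _ => m) := by
  letI : MeasureSpace ℝ := ⟨m⟩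
  haveI : SigmaFinite (volume : Measure ℝ) := ‹SigmaFinite m›
  exact MeasureTheory.Integrable.fintype_prod hf


lemma pi_withDensity (hσ : 0 < σ) (w : Fin d → ℝ) :
    Measure.pi (fun i => gaussianReal (w i) ⟨σ ^ 2, sq_nonneg σ⟩)
      = (Measure.pi fun _ : Fin d => gaussianReal 0 ⟨σ ^ 2, sq_nonneg σ⟩).withDensity
          (fun x => ENNReal.ofReal (∏ i, gr σ (w i) (x i))) := by
  refine Measure.pi_eq fun s hs => ?_
  rw [withDensity_apply _ (MeasurableSet.univ_pi hs),
    ← lintegral_indicator (MeasurableSet.univ_pi hs) _]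
  have key : ∀ x : Fin d → ℝ,
      Set.indicator (Set.univ.pi s) (fun x => ENNReal.ofReal (∏ i, gr σ (w i) (x i))) x
        = ENNReal.ofReal (∏ i, Set.indicator (s i) (gr σ (w i)) (x i)) := by
    intro x
    by_cases hx : x ∈ Set.univ.pi s
    · rw [Set.indicator_of_mem hx]
      congr 1
      refine Finset.prod_congr rfl fun i _ => ?_
      rw [Set.indicator_of_mem (hx i (Set.mem_univ i))]
    · rw [Set.indicator_of_notMem hx]
      obtain ⟨i, hi⟩ : ∃ i, x i ∉ s i := by simpa [Set.mem_pi] using hx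
      have : ∏ i, Set.indicator (s i) (gr σ (w i)) (x i) = 0 :=
        Finset.prod_eq_zero (Finset.mem_univ i) (by simp [Set.indicator_of_notMem hi])
      rw [this]
      simp
  simp_rw [key]
  have hint : ∀ i, Integrable (Set.indicator (s i) (gr σ (w i)))
      (gaussianReal 0 ⟨σ ^ 2, sq_nonneg σ⟩) :=
    fun i => (integrable_gr hσ (w i)).indicator (hs i)
  rw [← ofReal_integral_eq_lintegral_ofReal (pi_integrable _ _ hint)
    (ae_of_all _ fun x => Finset.prod_nonneg fun i _ =>
      Set.indicator_nonneg (fun t _ => gr_pos.le) _)]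
  rw [pi_integral]
  have heq : ∀ i, ∫ t, Set.indicator (s i) (gr σ (w i)) t
      ∂(gaussianReal 0 ⟨σ ^ 2, sq_nonneg σ⟩)
      = ((gaussianReal (w i) ⟨σ ^ 2, sq_nonneg σ⟩) (s i)).toReal := by
    intro i
    rw [integral_indicator (hs i)]
    exact setIntegral_gr hσ (w i) (hs i)
  simp_rw [heq]
  rw [← ENNReal.toReal_prod, ENNReal.ofReal_toReal]
  exact (ENNReal.prod_lt_top fun i _ => measure_lt_top _ _).ne

lemma pi_map_add (w : Fin d → ℝ) :
    (Measure.pi fun _ : Fin d => gaussianReal 0 ⟨σ ^ 2, sq_nonneg σ⟩).map (· + w)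
      = Measure.pi (fun i => gaussianReal (w i) ⟨σ ^ 2, sq_nonneg σ⟩) := by
  have h : ∀ i : Fin d, MeasurePreserving (fun t => t + w i)
      (gaussianReal 0 ⟨σ ^ 2, sq_nonneg σ⟩) (gaussianReal (w i) ⟨σ ^ 2, sq_nonneg σ⟩) :=
    fun i => ⟨measurable_add_const _, by rw [gaussianReal_map_add_const (μ := 0) (v := ⟨σ ^ 2, sq_nonneg σ⟩), zero_add]⟩
  exact (MeasureTheory.measurePreserving_pi _ _ h).map_eq



lemma key (hσ : 0 < σ) (w : Fin d → ℝ) (A : Set (Fin d → ℝ)) (hA : MeasurableSet A) :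
    |((Measure.pi fun _ : Fin d => gaussianReal 0 ⟨σ ^ 2, sq_nonneg σ⟩) A).toReal -
      ((Measure.pi fun i => gaussianReal (w i) ⟨σ ^ 2, sq_nonneg σ⟩) A).toReal|
      ≤ Real.sqrt (∑ i, w i ^ 2) / (2 * σ) := by
  set μ := Measure.pi fun _ : Fin d => gaussianReal 0 ⟨σ ^ 2, sq_nonneg σ⟩ with hμdef
  set ν := Measure.pi fun i => gaussianReal (w i) ⟨σ ^ 2, sq_nonneg σ⟩ with hνdef
  set r : (Fin d → ℝ) → ℝ := fun x => ∏ i, gr σ (w i) (x i) with hrdef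
  set s : (Fin d → ℝ) → ℝ := fun x => ∏ i, Real.sqrt (gr σ (w i) (x i)) with hsdef
  set c : ℝ := ∑ i, w i ^ 2 with hcdef
  set a : ℝ := rexp (-c / (8 * σ ^ 2)) with hadef
  have hσ2 : (0:ℝ) < σ ^ 2 := pow_pos hσ 2
  have hc0 : 0 ≤ c := Finset.sum_nonneg fun i _ => sq_nonneg _
  have h_r_nonneg : ∀ x, 0 ≤ r x := fun x => Finset.prod_nonneg fun i _ => gr_pos.le
  have h_s_nonneg : ∀ x, 0 ≤ s x :=
    fun x => Finset.prod_nonneg fun i _ => Real.sqrt_nonneg _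
  have hs_sq : ∀ x, s x ^ 2 = r x := by
    intro x
    rw [hsdef, ← Finset.prod_pow]
    exact Finset.prod_congr rfl fun i _ => Real.sq_sqrt gr_pos.le
  have h_int_r : Integrable r μ := pi_integrable _ _ fun i => integrable_gr hσ (w i)
  have h_int_s : Integrable s μ := pi_integrable _ _ fun i => integrable_sqrt_gr hσ (w i)
  haveI : IsProbabilityMeasure μ := by rw [hμdef]; infer_instance
  have h_int_r1 : ∫ x, r x ∂μ = 1 := by
    simp only [hrdef, hμdef]
    rw [pi_integral]
    simp [integral_gr hσ]
  have h_int_s_val : ∫ x, s x ∂μ = a := by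
    simp only [hsdef, hμdef]
    rw [pi_integral _ (fun i t => Real.sqrt (gr σ (w i) t))]
    simp_rw [integral_sqrt_gr hσ]
    rw [← Real.exp_sum]
    congr 1
    rw [hcdef]
    rw [neg_div, Finset.sum_div, ← Finset.sum_neg_distrib]
    exact Finset.sum_congr rfl fun i _ => neg_div _ _
  have ha_pos : 0 < a := Real.exp_pos _
  have ha_le : a ≤ 1 := by
    rw [hadef, Real.exp_le_one_iff, neg_div]
    exact neg_nonpos.mpr (by positivity)
  -- measure values as integrals
  have hν : (ν A).toReal = ∫ x in A, r x ∂μ := by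
    rw [hνdef, pi_withDensity hσ w, withDensity_apply _ hA, ← hμdef, ← hrdef,
      ← ofReal_integral_eq_lintegral_ofReal (h_int_r.restrict)
        (ae_of_all _ fun x => h_r_nonneg x),
      ENNReal.toReal_ofReal (setIntegral_nonneg hA fun x _ => h_r_nonneg x)]
  have hμA : (μ A).toReal = ∫ x in A, (1:ℝ) ∂μ := by
    rw [setIntegral_const]
    simp
    rfl
  have h_int1r : Integrable (fun x => 1 - r x) μ := (integrable_const 1).sub h_int_r
  have hdiff : (μ A).toReal - (ν A).toReal = ∫ x in A, (1 - r x) ∂μ := by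
    rw [hμA, hν, ← integral_sub (integrableOn_const (C := (1:ℝ)) (measure_lt_top _ _).ne (by simp))
      h_int_r.restrict]
  have htot : ∫ x, (1 - r x) ∂μ = 0 := by
    rw [integral_sub (integrable_const 1) h_int_r, h_int_r1]
    simp
  have hcompl : ∫ x in A, (1 - r x) ∂μ + ∫ x in Aᶜ, (1 - r x) ∂μ = 0 := by
    rw [integral_add_compl hA h_int1r]
    exact htot
  -- the 1/2 trick
  have habs : ∀ B : Set (Fin d → ℝ), |∫ x in B, (1 - r x) ∂μ| ≤ ∫ x in B, |1 - r x| ∂μ := by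
    intro B
    simpa [Real.norm_eq_abs] using
      norm_integral_le_integral_norm (μ := μ.restrict B) (f := fun x => 1 - r x)
  have hhalf : |∫ x in A, (1 - r x) ∂μ| ≤ (∫ x, |1 - r x| ∂μ) / 2 := by
    have h1 : |∫ x in A, (1 - r x) ∂μ| = |∫ x in Aᶜ, (1 - r x) ∂μ| := by
      have : ∫ x in A, (1 - r x) ∂μ = -∫ x in Aᶜ, (1 - r x) ∂μ := by linarith
      rw [this, abs_neg]
    have h2 : ∫ x in A, |1 - r x| ∂μ + ∫ x in Aᶜ, |1 - r x| ∂μ = ∫ x, |1 - r x| ∂μ :=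
      integral_add_compl hA h_int1r.abs
    have h3 := habs A
    have h4 := habs Aᶜ
    rw [h1] at h3 ⊢
    rw [← h1] at h4
    linarith [habs A, habs Aᶜ, h1]
  -- Cauchy-Schwarz
  have hpt : ∀ x, |1 - r x| = |1 - s x| * (1 + s x) := by
    intro x
    rw [← hs_sq x, show (1:ℝ) - s x ^ 2 = (1 - s x) * (1 + s x) by ring, abs_mul,
      abs_of_nonneg (show (0:ℝ) ≤ 1 + s x by linarith [h_s_nonneg x])]
  have h_fsq_eq : (fun x => |1 - s x| ^ 2) = fun x => 1 - 2 * s x + r x := by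
    funext x
    rw [sq_abs, ← hs_sq x]
    ring
  have h_gsq_eq : (fun x => (1 + s x) ^ 2) = fun x => 1 + 2 * s x + r x := by
    funext x
    rw [← hs_sq x]
    ring
  have hI1 : Integrable (fun x => 1 - 2 * s x) μ :=
    (integrable_const 1).sub (h_int_s.const_mul 2)
  have hI2 : Integrable (fun x => 1 + 2 * s x) μ :=
    (integrable_const 1).add (h_int_s.const_mul 2)
  have h_int_fsq : Integrable (fun x => |1 - s x| ^ 2) μ := by
    rw [h_fsq_eq]
    exact hI1.add h_int_r
  have h_int_gsq : Integrable (fun x => (1 + s x) ^ 2) μ := by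
    rw [h_gsq_eq]
    exact hI2.add h_int_r
  have h_val_fsq : ∫ x, |1 - s x| ^ 2 ∂μ = 2 - 2 * a := by
    rw [h_fsq_eq, integral_add hI1 h_int_r,
      integral_sub (integrable_const 1) (h_int_s.const_mul 2), integral_const_mul,
      h_int_r1, h_int_s_val]
    simp only [integral_const, measure_univ, ENNReal.toReal_one, probReal_univ, smul_eq_mul, mul_one, one_smul]
    ring
  have h_val_gsq : ∫ x, (1 + s x) ^ 2 ∂μ = 2 + 2 * a := by
    rw [h_gsq_eq, integral_add hI2 h_int_r,
      integral_add (integrable_const 1) (h_int_s.const_mul 2), integral_const_mul,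
      h_int_r1, h_int_s_val]
    simp only [integral_const, measure_univ, ENNReal.toReal_one, probReal_univ, smul_eq_mul, mul_one, one_smul]
    ring
  have hpq : Real.HolderConjugate 2 2 := Real.HolderConjugate.two_two
  have h_asm_s : AEStronglyMeasurable s μ := h_int_s.1
  have h_mem_f : MemLp (fun x => |1 - s x|) (ENNReal.ofReal 2) μ := by
    rw [show ENNReal.ofReal (2:ℝ) = 2 by norm_num]
    have hm : AEStronglyMeasurable (fun x => |1 - s x|) μ :=
      (aestronglyMeasurable_const.sub h_asm_s).norm
    exact (memLp_two_iff_integrable_sq hm).2 h_int_fsq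
  have h_mem_g : MemLp (fun x => 1 + s x) (ENNReal.ofReal 2) μ := by
    rw [show ENNReal.ofReal (2:ℝ) = 2 by norm_num]
    exact (memLp_two_iff_integrable_sq
      (aestronglyMeasurable_const.add h_asm_s)).2 h_int_gsq
  have hCS := integral_mul_le_Lp_mul_Lq_of_nonneg hpq
    (ae_of_all _ fun x => abs_nonneg (1 - s x))
    (ae_of_all _ fun x => by
      simp only [Pi.zero_apply]
      linarith [h_s_nonneg x]) h_mem_f h_mem_g
  have hrpow : ∀ y : ℝ, y ^ (2:ℝ) = y ^ 2 := fun y => by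
    rw [show (2:ℝ) = ((2:ℕ):ℝ) by norm_num, Real.rpow_natCast]
  simp_rw [hrpow] at hCS
  rw [h_val_fsq, h_val_gsq] at hCS
  -- assemble
  have hint_abs : ∫ x, |1 - r x| ∂μ ≤ (2 - 2*a) ^ (1/(2:ℝ)) * (2 + 2*a) ^ (1/(2:ℝ)) := by
    calc ∫ x, |1 - r x| ∂μ = ∫ x, |1 - s x| * (1 + s x) ∂μ := by simp_rw [hpt]
    _ ≤ _ := hCS
  have hsqrt_form : (2 - 2*a) ^ (1/(2:ℝ)) * (2 + 2*a) ^ (1/(2:ℝ))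
      = Real.sqrt ((2 - 2*a) * (2 + 2*a)) := by
    rw [← Real.sqrt_eq_rpow, ← Real.sqrt_eq_rpow, ← Real.sqrt_mul (by linarith)]
  have ha_sq : a ^ 2 = rexp (-c / (4 * σ ^ 2)) := by
    rw [hadef, sq, ← Real.exp_add]
    congr 1
    field_simp
    ring
  have h1ma : (2 - 2*a) * (2 + 2*a) ≤ c / σ ^ 2 := by
    have h5 : 1 - c / (4 * σ ^ 2) ≤ a ^ 2 := by
      rw [ha_sq, neg_div]
      have h7 := Real.add_one_le_exp (-(c / (4 * σ ^ 2)))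
      linarith
    have : (2 - 2*a) * (2 + 2*a) = 4 * (1 - a ^ 2) := by ring
    rw [this]
    have h6 : 4 * (c / (4 * σ ^ 2)) = c / σ ^ 2 := by field_simp
    nlinarith
  have hfinal : Real.sqrt ((2 - 2*a) * (2 + 2*a)) ≤ Real.sqrt c / σ := by
    calc Real.sqrt ((2 - 2*a) * (2 + 2*a)) ≤ Real.sqrt (c / σ ^ 2) :=
      Real.sqrt_le_sqrt h1ma
    _ = Real.sqrt c / σ := by
      rw [Real.sqrt_div hc0, Real.sqrt_sq hσ.le]
  rw [hdiff]
  calc |∫ x in A, (1 - r x) ∂μ| ≤ (∫ x, |1 - r x| ∂μ) / 2 := hhalf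
  _ ≤ (Real.sqrt c / σ) / 2 := by
      have := hint_abs.trans (hsqrt_form.le.trans hfinal)
      linarith [hint_abs, hsqrt_form, hfinal]
  _ = Real.sqrt c / (2 * σ) := by ring


end GaussTV

theorem gaussianPi_translate_total_variation (d : ℕ) (σ : ℝ) (hσ : 0 < σ)
    (v : EuclideanSpace ℝ (Fin d)) (A : Set (EuclideanSpace ℝ (Fin d)))
    (hA : MeasurableSet A) :
    |(gaussianPi d σ A).toReal - (gaussianPi d σ {x | x + v ∈ A}).toReal| ≤
      ‖v‖ / (2 * σ) := by
  classical
  set e := (MeasurableEquiv.toLp 2 (Fin d → ℝ)).symm with he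
  set w : Fin d → ℝ := fun i => v i with hw
  have hμmap : ∀ S : Set (EuclideanSpace ℝ (Fin d)), MeasurableSet S →
      gaussianPi d σ S
        = (Measure.pi fun _ : Fin d => gaussianReal 0 ⟨σ ^ 2, sq_nonneg σ⟩)
            (e.symm ⁻¹' S) := by
    intro S hS
    rw [gaussianPi, Measure.map_apply (MeasurableEquiv.toLp 2 (Fin d → ℝ)).measurable hS]
    rfl
  have hA' : MeasurableSet (e.symm ⁻¹' A) := e.symm.measurable hA
  have hvmeas : Measurable (fun x : EuclideanSpace ℝ (Fin d) => x + v) := by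
    have h1 : (fun x : EuclideanSpace ℝ (Fin d) => x + v)
        = e.symm ∘ (fun y : Fin d → ℝ => y + w) ∘ e := rfl
    rw [h1]
    have hmadd : Measurable (fun y : Fin d → ℝ => y + w) :=
      measurable_add_const w
    exact e.symm.measurable.comp (hmadd.comp e.measurable)
  have htrans_meas : MeasurableSet {x : EuclideanSpace ℝ (Fin d) | x + v ∈ A} :=
    hvmeas hA
  rw [hμmap A hA, hμmap _ htrans_meas]
  have hset : e.symm ⁻¹' {x | x + v ∈ A}
      = {y : Fin d → ℝ | y + w ∈ e.symm ⁻¹' A} := rfl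
  rw [hset]
  have hmadd : Measurable (fun y : Fin d → ℝ => y + w) :=
    measurable_add_const w
  have h2 : (Measure.pi fun _ : Fin d => gaussianReal 0 ⟨σ ^ 2, sq_nonneg σ⟩)
        {y : Fin d → ℝ | y + w ∈ e.symm ⁻¹' A}
      = (Measure.pi fun i => gaussianReal (w i) ⟨σ ^ 2, sq_nonneg σ⟩) (e.symm ⁻¹' A) := by
    rw [← GaussTV.pi_map_add w, Measure.map_apply hmadd hA']
    rfl
  rw [h2]
  have hb := GaussTV.key hσ w _ hA'
  refine hb.trans (le_of_eq ?_)
  congr 1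
  rw [EuclideanSpace.norm_eq]
  congr 1
  exact Finset.sum_congr rfl fun i _ => by rw [Real.norm_eq_abs, sq_abs]
end

section
/- For every σ > 0, every a ∈ ℝ, and every measurable set A ⊆ ℝ: |N(0, σ²)(A) − N(a, σ²)(A)| ≤ |a|/(2σ). -/
open MeasureTheory ProbabilityTheory Real
open scoped NNReal

lemma gauss_key_one_side (σ : ℝ) (hσ : 0 < σ) (a : ℝ) (ha : a ≠ 0)
    (A : Set ℝ) (hA : MeasurableSet A) :
    ((gaussianReal 0 ⟨σ ^ 2, sq_nonneg σ⟩) A).toReal -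
        ((gaussianReal a ⟨σ ^ 2, sq_nonneg σ⟩) A).toReal ≤ |a| / (2 * σ) := by
  set v : ℝ≥0 := ⟨σ ^ 2, sq_nonneg σ⟩ with hv_def
  have hvv : (v : ℝ) = σ ^ 2 := rfl
  have hv' : (0:ℝ) < (v:ℝ) := by rw [hvv]; positivity
  have hv : v ≠ 0 := by
    intro h
    rw [h] at hv'
    simp at hv'
  set f : ℝ → ℝ := gaussianPDFReal 0 v with hf_def
  set g : ℝ → ℝ := gaussianPDFReal a v with hg_def
  have hf_int : Integrable f := integrable_gaussianPDFReal 0 v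
  have hg_int : Integrable g := integrable_gaussianPDFReal a v
  have hμ : ∀ s : Set ℝ, MeasurableSet s →
      ((gaussianReal 0 v) s).toReal = ∫ x in s, f x := by
    intro s hs
    rw [gaussianReal_apply_eq_integral _ hv, ENNReal.toReal_ofReal
      (setIntegral_nonneg hs fun x _ => gaussianPDFReal_nonneg _ _ _)]
  have hν : ∀ s : Set ℝ, MeasurableSet s →
      ((gaussianReal a v) s).toReal = ∫ x in s, g x := by
    intro s hs
    rw [gaussianReal_apply_eq_integral _ hv, ENNReal.toReal_ofReal
      (setIntegral_nonneg hs fun x _ => gaussianPDFReal_nonneg _ _ _)]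
  set B : Set ℝ := {x | a * x ≤ a ^ 2 / 2} with hB_def
  set B' : Set ℝ := {x | a * x ≤ -(a ^ 2 / 2)} with hB'_def
  have hB : MeasurableSet B := measurableSet_le (measurable_id.const_mul a) measurable_const
  have hB' : MeasurableSet B' := measurableSet_le (measurable_id.const_mul a) measurable_const
  -- pointwise comparison of densities
  have hmono : ∀ x y : ℝ, x ^ 2 ≤ y ^ 2 →
      (√(2 * π * (v:ℝ)))⁻¹ * rexp (-y ^ 2 / (2 * (v:ℝ)))
        ≤ (√(2 * π * (v:ℝ)))⁻¹ * rexp (-x ^ 2 / (2 * (v:ℝ))) := by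
    intro x y h
    gcongr
  have hgf : ∀ x ∈ B, g x ≤ f x := by
    intro x hx
    have hx' : a * x ≤ a ^ 2 / 2 := hx
    simp only [hf_def, hg_def, gaussianPDFReal, sub_zero]
    exact hmono x (x - a) (by nlinarith)
  have hfg : ∀ x ∉ B, f x ≤ g x := by
    intro x hx
    have hx' : a ^ 2 / 2 < a * x := lt_of_not_ge hx
    simp only [hf_def, hg_def, gaussianPDFReal, sub_zero]
    exact hmono (x - a) x (by nlinarith)
  -- indicator comparison
  have hind : ∀ x, A.indicator (fun y => f y - g y) x ≤ B.indicator (fun y => f y - g y) x := by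
    intro x
    by_cases hxB : x ∈ B <;> by_cases hxA : x ∈ A
    · rw [Set.indicator_of_mem hxA, Set.indicator_of_mem hxB]
    · rw [Set.indicator_of_notMem hxA, Set.indicator_of_mem hxB]
      exact sub_nonneg.mpr (hgf x hxB)
    · rw [Set.indicator_of_mem hxA, Set.indicator_of_notMem hxB]
      exact sub_nonpos.mpr (hfg x hxB)
    · rw [Set.indicator_of_notMem hxA, Set.indicator_of_notMem hxB]
  have hsub_int : Integrable (fun y => f y - g y) := hf_int.sub hg_int
  -- ν B = μ B'
  have hmap : (gaussianReal 0 v).map (· + a) = gaussianReal a v := by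
    simpa using gaussianReal_map_add_const (μ := 0) (v := v) a
  have hpre : (· + a) ⁻¹' B = B' := by
    ext x
    simp only [Set.mem_preimage, hB_def, hB'_def, Set.mem_setOf_eq]
    constructor <;> intro h <;> nlinarith
  have hνB : ((gaussianReal a v) B).toReal = ((gaussianReal 0 v) B').toReal := by
    rw [← hmap, Measure.map_apply (measurable_add_const a) hB, hpre]
  have hB'B : B' ⊆ B := by
    intro x hx
    have hx' : a * x ≤ -(a ^ 2 / 2) := hx
    have h0 : (0:ℝ) ≤ a ^ 2 / 2 := by positivity
    show a * x ≤ a ^ 2 / 2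
    linarith
  -- the slab B \ B' is inside Icc (-(|a|/2)) (|a|/2)
  have hslab : B \ B' ⊆ Set.Icc (-(|a| / 2)) (|a| / 2) := by
    rintro x ⟨hx1, hx2⟩
    have h1 : a * x ≤ a ^ 2 / 2 := hx1
    have h2 : -(a ^ 2 / 2) < a * x := lt_of_not_ge hx2
    rcases lt_or_gt_of_ne ha with hneg | hpos
    · rw [abs_of_neg hneg]
      constructor <;> nlinarith
    · rw [abs_of_pos hpos]
      constructor <;> nlinarith
  set C : ℝ := (√(2 * π * (v:ℝ)))⁻¹ with hC_def
  have hfC : ∀ x : ℝ, f x ≤ C := by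
    intro x
    rw [hf_def, gaussianPDFReal, hC_def]
    nth_rewrite 2 [← mul_one (√(2 * π * (v:ℝ)))⁻¹]
    gcongr
    rw [Real.exp_le_one_iff]
    apply div_nonpos_of_nonpos_of_nonneg
    · simpa using sq_nonneg (x - 0)
    · positivity
  -- chain of inequalities
  have step1 : ((gaussianReal 0 v) A).toReal - ((gaussianReal a v) A).toReal
      ≤ ((gaussianReal 0 v) B).toReal - ((gaussianReal a v) B).toReal := by
    rw [hμ A hA, hν A hA, hμ B hB, hν B hB,
      ← integral_sub hf_int.integrableOn hg_int.integrableOn,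
      ← integral_sub hf_int.integrableOn hg_int.integrableOn,
      ← integral_indicator hA, ← integral_indicator hB]
    exact integral_mono (hsub_int.indicator hA) (hsub_int.indicator hB) hind
  have step2 : ((gaussianReal 0 v) B).toReal - ((gaussianReal a v) B).toReal
      = ∫ x in B \ B', f x := by
    rw [hνB, hμ B hB, hμ B' hB', integral_diff hB' hf_int.integrableOn hB'B]
  have step3 : ∫ x in B \ B', f x ≤ ∫ x in Set.Icc (-(|a| / 2)) (|a| / 2), f x := by
    apply setIntegral_mono_set hf_int.integrableOn
      (ae_of_all _ fun x => gaussianPDFReal_nonneg _ _ _)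
    exact (HasSubset.Subset.eventuallyLE hslab)
  have step4 : ∫ x in Set.Icc (-(|a| / 2)) (|a| / 2), f x ≤ C * |a| := by
    have hconst : ∫ _x in Set.Icc (-(|a| / 2)) (|a| / 2), C = C * |a| := by
      rw [setIntegral_const, Real.volume_real_Icc_of_le (by linarith [abs_nonneg a]), smul_eq_mul,
        show |a| / 2 - -(|a| / 2) = |a| by ring,
        mul_comm]
    rw [← hconst]
    apply setIntegral_mono_on hf_int.integrableOn _ measurableSet_Icc fun x _ => hfC x
    exact integrableOn_const (by rw [Real.volume_Icc]; exact ENNReal.ofReal_ne_top)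
  have step5 : C * |a| ≤ |a| / (2 * σ) := by
    have hsqrt : 2 * σ ≤ √(2 * π * (v:ℝ)) := by
      rw [hvv]
      have h4 : (2 * σ) ^ 2 ≤ 2 * π * σ ^ 2 := by nlinarith [Real.pi_gt_three, mul_pos hσ hσ]
      have h5 := Real.sqrt_le_sqrt h4
      rwa [Real.sqrt_sq (by positivity)] at h5
    have hC_le : C ≤ (2 * σ)⁻¹ := by
      rw [hC_def]
      exact inv_anti₀ (by positivity) hsqrt
    calc C * |a| ≤ (2 * σ)⁻¹ * |a| := by gcongr
      _ = |a| / (2 * σ) := by ring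
  linarith [step1, step2, step3, step4, step5]

theorem gaussianReal_mean_shift_total_variation (σ : ℝ) (hσ : 0 < σ) (a : ℝ)
    (A : Set ℝ) (hA : MeasurableSet A) :
    |((gaussianReal 0 ⟨σ ^ 2, sq_nonneg σ⟩) A).toReal -
        ((gaussianReal a ⟨σ ^ 2, sq_nonneg σ⟩) A).toReal| ≤ |a| / (2 * σ) := by
  by_cases ha : a = 0
  · subst ha
    simp
  · rw [abs_sub_le_iff]
    constructor
    · exact gauss_key_one_side σ hσ a ha A hA
    · have key := gauss_key_one_side σ hσ a ha Aᶜ hA.compl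
      have h1 : ((gaussianReal 0 ⟨σ ^ 2, sq_nonneg σ⟩) Aᶜ).toReal
          = 1 - ((gaussianReal 0 ⟨σ ^ 2, sq_nonneg σ⟩) A).toReal := by
        haveI := instIsProbabilityMeasureGaussianReal 0 ⟨σ ^ 2, sq_nonneg σ⟩
        rw [prob_compl_eq_one_sub hA, ENNReal.toReal_sub_of_le prob_le_one ENNReal.one_ne_top,
          ENNReal.toReal_one]
      have h2 : ((gaussianReal a ⟨σ ^ 2, sq_nonneg σ⟩) Aᶜ).toReal
          = 1 - ((gaussianReal a ⟨σ ^ 2, sq_nonneg σ⟩) A).toReal := by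
        haveI := instIsProbabilityMeasureGaussianReal a ⟨σ ^ 2, sq_nonneg σ⟩
        rw [prob_compl_eq_one_sub hA, ENNReal.toReal_sub_of_le prob_le_one ENNReal.one_ne_top,
          ENNReal.toReal_one]
      rw [h1, h2] at key
      linarith
end
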